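/- For every c > 0 and every L̄ > 0 there exists a constant C such that for all ℓ ∈ (0, L̄] the function κ_c(ℓ) := −cos(Y_c(ℓ)) is differentiable and satisfies | (d/dℓ)κ_c(ℓ) | ≤ C·ℓ. -/

import Mathlib

open Real

/-- `Y_c(ℓ) = 2 arctan(e^c · tan((1/2) arctan(sinh(ℓ/2))))`; geometrically
`π/2 − Y_c(ℓ) = (ℓ/(2π)) Z_c(ℓ)` where `{Z_c(ℓ)}×S¹` is the circle in the standard collar
around a geodesic of length `ℓ` at hyperbolic distance `c` from the collar boundary. -/
noncomputable def Yc (c ℓ : ℝ) : ℝ :=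
  2 * Real.arctan (Real.exp c * Real.tan ((1 / 2) * Real.arctan (Real.sinh (ℓ / 2))))

/-- inner function -/
noncomputable def uu (ℓ : ℝ) : ℝ := Real.tan ((1 / 2) * Real.arctan (Real.sinh (ℓ / 2)))

lemma B_abs_le (ℓ : ℝ) : |(1 / 2) * Real.arctan (Real.sinh (ℓ / 2))| ≤ π / 4 := by
  rw [abs_mul]
  have h := Real.arctan_lt_pi_div_two (Real.sinh (ℓ / 2))
  have h2 := Real.neg_pi_div_two_lt_arctan (Real.sinh (ℓ / 2))
  have : |Real.arctan (Real.sinh (ℓ / 2))| ≤ π / 2 := by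
    rw [abs_le]; constructor <;> linarith
  calc |(1:ℝ)/2| * |Real.arctan (Real.sinh (ℓ / 2))| ≤ (1/2) * (π/2) := by
        rw [abs_of_nonneg (by norm_num : (0:ℝ) ≤ 1/2)]
        exact mul_le_mul_of_nonneg_left this (by norm_num)
    _ = π / 4 := by ring

lemma cosB_sq_ge (ℓ : ℝ) :
    1 / 2 ≤ Real.cos ((1 / 2) * Real.arctan (Real.sinh (ℓ / 2))) ^ 2 := by
  set B := (1 / 2) * Real.arctan (Real.sinh (ℓ / 2)) with hB
  have h1 : Real.cos (π / 4) ≤ Real.cos |B| := by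
    apply Real.cos_le_cos_of_nonneg_of_le_pi (abs_nonneg _)
    · linarith [Real.pi_pos]
    · exact B_abs_le ℓ
  rw [Real.cos_abs] at h1
  rw [Real.cos_pi_div_four] at h1
  have h2 : Real.sqrt 2 ^ 2 = 2 := Real.sq_sqrt (by norm_num)
  nlinarith [Real.sqrt_nonneg 2]

lemma cosB_pos (ℓ : ℝ) : 0 < Real.cos ((1 / 2) * Real.arctan (Real.sinh (ℓ / 2))) := by
  apply Real.cos_pos_of_mem_Ioo
  have := B_abs_le ℓ
  rw [abs_le] at this
  constructor <;> [linarith [Real.pi_pos]; linarith [Real.pi_pos]]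

noncomputable def uuD (ℓ : ℝ) : ℝ :=
  1 / Real.cos ((1 / 2) * Real.arctan (Real.sinh (ℓ / 2))) ^ 2 *
    ((1 / 2) * (1 / (1 + Real.sinh (ℓ / 2) ^ 2) * (Real.cosh (ℓ / 2) * (1 / 2))))

lemma uu_hasDerivAt (ℓ : ℝ) : HasDerivAt uu (uuD ℓ) ℓ := by
  have h1 : HasDerivAt (fun l : ℝ => Real.sinh (l / 2)) (Real.cosh (ℓ / 2) * (1 / 2)) ℓ := by
    have := (Real.hasDerivAt_sinh (ℓ / 2)).comp ℓ ((hasDerivAt_id ℓ).div_const 2)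
    simpa [Function.comp_def] using this
  have h2 := (Real.hasDerivAt_arctan (Real.sinh (ℓ / 2))).comp ℓ h1
  have h3 := h2.const_mul (1 / 2 : ℝ)
  have hcos : Real.cos ((1 / 2) * Real.arctan (Real.sinh (ℓ / 2))) ≠ 0 := (cosB_pos ℓ).ne'
  have h4 := (Real.hasDerivAt_tan hcos).comp ℓ h3
  have h4' : HasDerivAt uu
      (1 / Real.cos ((1 / 2) * Real.arctan (Real.sinh (ℓ / 2))) ^ 2 *
        ((1 / 2) * (1 / (1 + Real.sinh (ℓ / 2) ^ 2) * (Real.cosh (ℓ / 2) * (1 / 2))))) ℓ := h4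
  exact h4'

lemma uuD_bound (ℓ : ℝ) : |uuD ℓ| ≤ 1 / 2 := by
  have hcosh : (1 : ℝ) ≤ Real.cosh (ℓ / 2) := Real.one_le_cosh _
  have hcos2 := cosB_sq_ge ℓ
  have hcoshpos : (0 : ℝ) < Real.cosh (ℓ / 2) := by linarith
  have hcospos : (0 : ℝ) < Real.cos ((1 / 2) * Real.arctan (Real.sinh (ℓ / 2))) ^ 2 := by
    linarith
  have hsq : 1 + Real.sinh (ℓ / 2) ^ 2 = Real.cosh (ℓ / 2) ^ 2 := (Real.cosh_sq' _).symm
  have heq : uuD ℓ = 1 / (4 * Real.cosh (ℓ / 2) *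
      Real.cos ((1 / 2) * Real.arctan (Real.sinh (ℓ / 2))) ^ 2) := by
    have hne1 : Real.cosh (ℓ / 2) ≠ 0 := hcoshpos.ne'
    have hne2 : Real.cos ((1 / 2) * Real.arctan (Real.sinh (ℓ / 2))) ≠ 0 := (cosB_pos ℓ).ne'
    rw [uuD, hsq, eq_div_iff (by positivity)]
    field_simp
    have hne2' : Real.cos (Real.arctan (Real.sinh (ℓ / 2)) / 2) ≠ 0 := by
      rw [show Real.arctan (Real.sinh (ℓ / 2)) / 2 =
          (1 / 2) * Real.arctan (Real.sinh (ℓ / 2)) from by ring]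
      exact hne2
    rw [mul_div_right_comm, div_self hne2']
    ring
  rw [heq, abs_of_nonneg (by positivity)]
  rw [div_le_div_iff₀ (by positivity) (by norm_num)]
  nlinarith

lemma uu_abs_le (ℓ : ℝ) : |uu ℓ| ≤ (1 / 2) * |ℓ| := by
  have h := convex_univ.norm_image_sub_le_of_norm_hasDerivWithin_le
    (f := uu) (f' := uuD) (C := 1 / 2)
    (fun x _ => (uu_hasDerivAt x).hasDerivWithinAt)
    (fun x _ => by simpa using uuD_bound x) (Set.mem_univ 0) (Set.mem_univ ℓ)
  have h0 : uu 0 = 0 := by simp [uu]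
  simpa [h0, Real.norm_eq_abs] using h

lemma abs_arctan_le (x : ℝ) : |Real.arctan x| ≤ |x| := by
  have h := convex_univ.norm_image_sub_le_of_norm_hasDerivWithin_le
    (f := Real.arctan) (f' := fun y => 1 / (1 + y ^ 2)) (C := 1)
    (fun y _ => (Real.hasDerivAt_arctan y).hasDerivWithinAt)
    (fun y _ => by
      rw [Real.norm_eq_abs, abs_of_nonneg (by positivity)]
      rw [div_le_one (by positivity)]; nlinarith [sq_nonneg y])
    (Set.mem_univ 0) (Set.mem_univ x)
  simpa [Real.norm_eq_abs] using h

/-- The geodesic curvature `κ_c(ℓ) = −cos(Y_c(ℓ))` of the circle at distance `c` from the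
collar boundary is differentiable in `ℓ` with `|κ_c′(ℓ)| ≤ C ℓ` for `ℓ ∈ (0, L̄]`. -/
theorem curvature_derivative_bound (c : ℝ) (hc : 0 < c) (Lbar : ℝ) (hL : 0 < Lbar) :
    ∃ C : ℝ, ∀ ℓ : ℝ, ℓ ∈ Set.Ioc 0 Lbar →
      DifferentiableAt ℝ (fun l => -Real.cos (Yc c l)) ℓ ∧
      |deriv (fun l => -Real.cos (Yc c l)) ℓ| ≤ C * ℓ := by
  refine ⟨Real.exp c ^ 2, fun ℓ hℓ => ?_⟩
  obtain ⟨hℓ0, hℓL⟩ := hℓ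
  have hexp : (0 : ℝ) < Real.exp c := Real.exp_pos c
  have h5 : HasDerivAt (fun l => Real.exp c * uu l) (Real.exp c * uuD ℓ) ℓ :=
    (uu_hasDerivAt ℓ).const_mul _
  have h6 := (Real.hasDerivAt_arctan (Real.exp c * uu ℓ)).comp ℓ h5
  have h7 := h6.const_mul (2 : ℝ)
  have h7' : HasDerivAt (fun l => Yc c l)
      (2 * (1 / (1 + (Real.exp c * uu ℓ) ^ 2) * (Real.exp c * uuD ℓ))) ℓ := by
    simpa [Yc, uu, Function.comp] using h7
  have h8 := ((Real.hasDerivAt_cos (Yc c ℓ)).comp ℓ h7').neg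
  have h8' : HasDerivAt (fun l => -Real.cos (Yc c l))
      (-(-Real.sin (Yc c ℓ) * (2 * (1 / (1 + (Real.exp c * uu ℓ) ^ 2) * (Real.exp c * uuD ℓ))))) ℓ := h8
  refine ⟨h8'.differentiableAt, ?_⟩
  rw [h8'.deriv]
  have hden : (1 : ℝ) ≤ 1 + (Real.exp c * uu ℓ) ^ 2 := by nlinarith [sq_nonneg (Real.exp c * uu ℓ)]
  have hsin : |Real.sin (Yc c ℓ)| ≤ Real.exp c * ℓ := by
    calc |Real.sin (Yc c ℓ)| ≤ |Yc c ℓ| := Real.abs_sin_le_abs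
      _ = 2 * |Real.arctan (Real.exp c * uu ℓ)| := by
          rw [Yc, abs_mul]; simp only [uu]; norm_num
      _ ≤ 2 * |Real.exp c * uu ℓ| := by
          have := abs_arctan_le (Real.exp c * uu ℓ); linarith
      _ = 2 * Real.exp c * |uu ℓ| := by
          rw [abs_mul, abs_of_pos hexp]; ring
      _ ≤ 2 * Real.exp c * ((1 / 2) * |ℓ|) := by
          have := uu_abs_le ℓ
          have h2 : (0:ℝ) ≤ 2 * Real.exp c := by positivity
          nlinarith
      _ = Real.exp c * |ℓ| := by ring
      _ = Real.exp c * ℓ := by rw [abs_of_pos hℓ0]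
  have hD : |2 * (1 / (1 + (Real.exp c * uu ℓ) ^ 2) * (Real.exp c * uuD ℓ))| ≤ Real.exp c := by
    rw [abs_mul, abs_mul, abs_mul]
    have h1 : |1 / (1 + (Real.exp c * uu ℓ) ^ 2)| ≤ 1 := by
      rw [abs_of_nonneg (by positivity), div_le_one (by linarith)]; linarith
    have h2 : |uuD ℓ| ≤ 1 / 2 := uuD_bound ℓ
    have h3 : |Real.exp c| = Real.exp c := abs_of_pos hexp
    rw [h3]
    calc |(2:ℝ)| * (|1 / (1 + (Real.exp c * uu ℓ) ^ 2)| * (Real.exp c * |uuD ℓ|))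
        ≤ 2 * (1 * (Real.exp c * (1 / 2))) := by
          have : Real.exp c * |uuD ℓ| ≤ Real.exp c * (1/2) :=
            mul_le_mul_of_nonneg_left h2 hexp.le
          have hnn : (0:ℝ) ≤ Real.exp c * |uuD ℓ| := by positivity
          rw [abs_of_nonneg (by norm_num : (0:ℝ) ≤ 2)]
          nlinarith [abs_nonneg (1 / (1 + (Real.exp c * uu ℓ) ^ 2))]
      _ = Real.exp c := by ring
  calc |-(-Real.sin (Yc c ℓ) * (2 * (1 / (1 + (Real.exp c * uu ℓ) ^ 2) * (Real.exp c * uuD ℓ))))|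
      = |Real.sin (Yc c ℓ)| * |2 * (1 / (1 + (Real.exp c * uu ℓ) ^ 2) * (Real.exp c * uuD ℓ))| := by
        rw [abs_neg, abs_mul, abs_neg]
    _ ≤ (Real.exp c * ℓ) * Real.exp c := by
        apply mul_le_mul hsin hD (abs_nonneg _) (by positivity)
    _ = Real.exp c ^ 2 * ℓ := by ring
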